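/- Sub-homogeneity bound: for any dual quaternion matrix Ẋ = X_st + X_in ε and any dual quaternion q̇ = q_st + q_in ε, v(q̇ Ẋ) ≤ |q̇|_D v(Ẋ), where |q̇|_D = |q_st| + |q_in| ε, v(Ẋ) = ||X_st||_F + ||X_in||_F ε, and the inequality is in the lexicographic order on dual numbers. -/

import Mathlib

open scoped Quaternion Matrix

/-- Frobenius norm of a quaternion matrix. -/
noncomputable def frobQ {m n : ℕ} (A : Matrix (Fin m) (Fin n) ℍ[ℝ]) : ℝ :=
  Real.sqrt (∑ i, ∑ j, ‖A i j‖ ^ 2)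

/-- Lexicographic order `≤` on dual numbers represented as pairs. -/
def dle (p q : ℝ × ℝ) : Prop := p.1 < q.1 ∨ (p.1 = q.1 ∧ p.2 ≤ q.2)

/-- Multiplication of dual numbers: `(a+bε)(c+dε) = ac + (ad+bc)ε`. -/
def dmul (p q : ℝ × ℝ) : ℝ × ℝ := (p.1 * q.1, p.1 * q.2 + p.2 * q.1)

/-- `v(Ẋ) = ‖X_st‖_F + ‖X_in‖_F ε` for a dual quaternion matrix. -/
noncomputable def vQ {m n : ℕ}
    (X : Matrix (Fin m) (Fin n) ℍ[ℝ] × Matrix (Fin m) (Fin n) ℍ[ℝ]) : ℝ × ℝ :=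
  (frobQ X.1, frobQ X.2)

/-- Action of a dual quaternion scalar on a dual quaternion matrix:
`q̇ Ẋ = q_st X_st + (q_in X_st + q_st X_in) ε`. -/
noncomputable def dsmulQ {m n : ℕ} (q : ℍ[ℝ] × ℍ[ℝ])
    (X : Matrix (Fin m) (Fin n) ℍ[ℝ] × Matrix (Fin m) (Fin n) ℍ[ℝ]) :
    Matrix (Fin m) (Fin n) ℍ[ℝ] × Matrix (Fin m) (Fin n) ℍ[ℝ] :=
  (q.1 • X.1, q.2 • X.1 + q.1 • X.2)


lemma frobQ_smul {m n : ℕ} (q : ℍ[ℝ]) (A : Matrix (Fin m) (Fin n) ℍ[ℝ]) :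
    frobQ (q • A) = ‖q‖ * frobQ A := by
  unfold frobQ
  have h : ∀ i j, ‖(q • A) i j‖ ^ 2 = ‖q‖ ^ 2 * ‖A i j‖ ^ 2 := by
    intro i j
    simp [Matrix.smul_apply, norm_smul, mul_pow]
  simp only [h, ← Finset.mul_sum]
  rw [Real.sqrt_mul (sq_nonneg _), Real.sqrt_sq (norm_nonneg q)]

lemma frobQ_add_le {m n : ℕ} (A B : Matrix (Fin m) (Fin n) ℍ[ℝ]) :
    frobQ (A + B) ≤ frobQ A + frobQ B := by
  set u : EuclideanSpace ℝ (Fin m × Fin n) := WithLp.toLp 2 (fun p : Fin m × Fin n => ‖A p.1 p.2‖) with hu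
  set v : EuclideanSpace ℝ (Fin m × Fin n) := WithLp.toLp 2 (fun p : Fin m × Fin n => ‖B p.1 p.2‖) with hv
  have hnu : frobQ A = ‖u‖ := by
    rw [EuclideanSpace.norm_eq]
    unfold frobQ
    congr 1
    rw [← Finset.sum_product']
    simp [hu, sq_abs]
  have hnv : frobQ B = ‖v‖ := by
    rw [EuclideanSpace.norm_eq]
    unfold frobQ
    congr 1
    rw [← Finset.sum_product']
    simp [hv, sq_abs]
  have hle : frobQ (A + B) ≤ ‖u + v‖ := by
    rw [EuclideanSpace.norm_eq]
    unfold frobQ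
    apply Real.sqrt_le_sqrt
    rw [← Finset.sum_product']
    apply Finset.sum_le_sum
    intro p _
    have h1 : ‖(A + B) p.1 p.2‖ ≤ |(u + v) p| := by
      simp only [PiLp.add_apply, hu, hv, PiLp.toLp_apply]
      calc ‖(A + B) p.1 p.2‖ ≤ ‖A p.1 p.2‖ + ‖B p.1 p.2‖ := norm_add_le _ _
        _ ≤ |‖A p.1 p.2‖ + ‖B p.1 p.2‖| := le_abs_self _
    calc ‖(A + B) p.1 p.2‖ ^ 2 ≤ |(u + v) p| ^ 2 := by
          apply pow_le_pow_left₀ (norm_nonneg _) h1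
      _ = ‖(u + v) p‖ ^ 2 := by rw [Real.norm_eq_abs]
  calc frobQ (A + B) ≤ ‖u + v‖ := hle
    _ ≤ ‖u‖ + ‖v‖ := norm_add_le _ _
    _ = frobQ A + frobQ B := by rw [hnu, hnv]

/-- Sub-homogeneity bound: `v(q̇ Ẋ) ≤ |q̇|_D v(Ẋ)` in the lexicographic order,
where `|q̇|_D = |q_st| + |q_in| ε`. -/
theorem v_dsmul_le {m n : ℕ} (q : ℍ[ℝ] × ℍ[ℝ])
    (X : Matrix (Fin m) (Fin n) ℍ[ℝ] × Matrix (Fin m) (Fin n) ℍ[ℝ]) :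
    dle (vQ (dsmulQ q X)) (dmul (‖q.1‖, ‖q.2‖) (vQ X)) := by
  right
  constructor
  · simp [vQ, dsmulQ, dmul, frobQ_smul]
  · simp only [vQ, dsmulQ, dmul]
    calc frobQ (q.2 • X.1 + q.1 • X.2)
        ≤ frobQ (q.2 • X.1) + frobQ (q.1 • X.2) := frobQ_add_le _ _
      _ = ‖q.2‖ * frobQ X.1 + ‖q.1‖ * frobQ X.2 := by rw [frobQ_smul, frobQ_smul]
      _ = ‖q.1‖ * frobQ X.2 + ‖q.2‖ * frobQ X.1 := by ring
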